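/- Let K be a finite extension of ℚ_p with ramification index e = e(K/ℚ_p). Then log(O_K^×) ⊆ {x ∈ K : |x|_p ≤ e/(ln(p)·e^1)}, i.e. the image of the unit group under the p-adic logarithm lies in the closed disc of radius e(K/ℚ_p)/(exp(1)·ln p). -/
import Mathlib


/-- The `p`-adic logarithm `log(1+a)`, given by the power series `∑_{n≥1} (-1)^{n+1} aⁿ/n`. -/
noncomputable def padicLogOneAdd {K : Type*} [NormedField K] (a : K) : K :=
  ∑' n : ℕ, ((-1 : K) ^ n / ((n : K) + 1)) * a ^ (n + 1)

-- x * exp(-(c*x)) ≤ 1/(exp 1 * c)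
lemma aux_real (c x : ℝ) (hc : 0 < c) (hx : 0 ≤ x) :
    x * Real.exp (-(c * x)) ≤ 1 / (Real.exp 1 * c) := by
  have h1 : c * x ≤ Real.exp (c * x - 1) := by
    have := Real.add_one_le_exp (c * x - 1)
    linarith
  have h2 : Real.exp (c * x - 1) = Real.exp (c * x) / Real.exp 1 := by
    rw [Real.exp_sub]
  have hE : 0 < Real.exp 1 := Real.exp_pos 1
  have hEx : 0 < Real.exp (c * x) := Real.exp_pos _
  rw [Real.exp_neg, inv_eq_one_div, mul_one_div,
    div_le_div_iff₀ hEx (by positivity)]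
  have h3 : Real.exp (c * x - 1) * Real.exp 1 = Real.exp (c * x) := by
    rw [← Real.exp_add]; ring_nf
  nlinarith [mul_le_mul_of_nonneg_right h1 hE.le]

-- padic norm of a natural ≥ 1/n
lemma aux_padic (p : ℕ) [Fact p.Prime] (m : ℕ) (hm : 0 < m) :
    ((m : ℝ))⁻¹ ≤ ‖(m : ℚ_[p])‖ := by
  have hm0 : (m : ℚ_[p]) ≠ 0 := Nat.cast_ne_zero.mpr hm.ne'
  rw [Padic.norm_eq_zpow_neg_valuation hm0, Padic.valuation_natCast]
  have hdvd : p ^ padicValNat p m ≤ m := Nat.le_of_dvd hm pow_padicValNat_dvd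
  have hp1 : (1:ℝ) < p := by exact_mod_cast (Fact.out : p.Prime).one_lt
  rw [zpow_neg, zpow_natCast]
  apply inv_anti₀ (by positivity)
  exact_mod_cast hdvd

/-- Let `K` be a finite extension of `ℚ_p` with ramification index `e = e(K/ℚ_p)`
(encoded by a uniformizer `π` with `‖π‖ = p^{-1/e}` of maximal norm among the elements
of the maximal ideal).  Then `log(O_K^×) ⊆ {x ∈ K : |x|_p ≤ e/(exp(1)·ln p)}`.
Since the extended logarithm kills Teichmüller representatives,
`log(O_K^×) = log(1 + m_K)`, i.e. the image of `a ↦ log(1+a)` for `‖a‖ < 1`. -/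
theorem padic_log_units_in_disc (p : ℕ) [hp : Fact p.Prime]
    (K : Type*) [NontriviallyNormedField K] [CompleteSpace K] [IsUltrametricDist K]
    [Algebra ℚ_[p] K] [FiniteDimensional ℚ_[p] K]
    (hnorm : ∀ x : ℚ_[p], ‖algebraMap ℚ_[p] K x‖ = ‖x‖)
    (e : ℕ) (he : 0 < e) (π : K)
    (hπ : ‖π‖ = (p : ℝ) ^ (-(1 / (e : ℝ))))
    (hmax : ∀ x : K, ‖x‖ < 1 → ‖x‖ ≤ ‖π‖) :
    (fun a => padicLogOneAdd a) '' {a : K | ‖a‖ < 1}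
      ⊆ {x : K | ‖x‖ ≤ (e : ℝ) / (Real.exp 1 * Real.log p)} := by

  rintro x ⟨a, ha, rfl⟩
  simp only [Set.mem_setOf_eq] at ha ⊢
  have hp1 : (1:ℝ) < p := by exact_mod_cast hp.out.one_lt
  have hp0 : (0:ℝ) < p := by positivity
  have hlogp : 0 < Real.log p := Real.log_pos hp1
  have he' : (0:ℝ) < e := by exact_mod_cast he
  set c : ℝ := Real.log p / e with hc_def
  have hc : 0 < c := div_pos hlogp he'
  have hC : (e:ℝ) / (Real.exp 1 * Real.log p) = 1 / (Real.exp 1 * c) := by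
    rw [hc_def]; field_simp
  have hπval : ‖π‖ = Real.exp (-c) := by
    rw [hπ, Real.rpow_def_of_pos hp0]
    congr 1
    rw [hc_def]; ring
  have ha' : ‖a‖ ≤ Real.exp (-c) := hπval ▸ hmax a ha
  rw [hC]
  refine IsUltrametricDist.norm_tsum_le_of_forall_le (fun n => ?_)
  have hterm : ‖((-1 : K) ^ n / ((n : K) + 1)) * a ^ (n + 1)‖
      = ‖((n:K)+1)‖⁻¹ * ‖a‖ ^ (n+1) := by
    rw [norm_mul, norm_div, norm_pow, norm_neg, norm_one, one_pow, one_div, norm_pow]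
  have hden : ((n:ℝ)+1)⁻¹ ≤ ‖((n:K)+1)‖ := by
    have h1 : ((n:K)+1) = algebraMap ℚ_[p] K (((n+1:ℕ) : ℚ_[p])) := by
      rw [map_natCast]; push_cast; ring
    rw [h1, hnorm]
    have := aux_padic p (n+1) (Nat.succ_pos n)
    simpa using this
  have hden' : ‖((n:K)+1)‖⁻¹ ≤ ((n:ℝ)+1) := by
    have hpos : (0:ℝ) < ‖((n:K)+1)‖ :=
      lt_of_lt_of_le (by positivity) hden
    rw [inv_le_comm₀ hpos (by positivity)]
    exact hden
  have hpow : ‖a‖ ^ (n+1) ≤ Real.exp (-(c * (n+1))) := by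
    calc ‖a‖ ^ (n+1) ≤ (Real.exp (-c)) ^ (n+1) :=
          pow_le_pow_left₀ (norm_nonneg a) ha' _
      _ = Real.exp (-(c * (n+1))) := by
          rw [← Real.exp_nat_mul]; congr 1; push_cast; ring
  calc ‖((-1 : K) ^ n / ((n : K) + 1)) * a ^ (n + 1)‖
      = ‖((n:K)+1)‖⁻¹ * ‖a‖ ^ (n+1) := hterm
    _ ≤ ((n:ℝ)+1) * Real.exp (-(c * (n+1))) := by
        apply mul_le_mul hden' hpow (by positivity) (by positivity)
    _ ≤ 1 / (Real.exp 1 * c) := aux_real c ((n:ℝ)+1) hc (by positivity)
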